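/- Let b₁, b₂, σ₁, σ₂ : ℝ → ℝ be continuous functions with σ₁(u)² + σ₂(u)² > 0 for every u ∈ ℝ, let α(u) = (b₁(u) - b₂(u))/(√2 (σ₁(u)² + σ₂(u)²)), and let c > 0. Define h : ℝ² → ℝ by h(y) = 0 if y₁ = 0, and for y₁ ≠ 0 by h(y) = (1/√2)[(b₁(y₁/√2 + y₂) 𝟙_{y₁<0} + b₂(y₁/√2 + y₂) 𝟙_{y₁>0}) - (b₁(-y₁/√2 + y₂) 𝟙_{y₁>0} + b₂(-y₁/√2 + y₂) 𝟙_{y₁<0})] + sgn(y₁) φ(y₁/c) α(y₂) [σ₁(y₁/√2 + y₂)² + σ₂(-y₁/√2 + y₂)²]. Then h is continuous on all of ℝ²; in particular, for every y₂ ∈ ℝ, h(y₁, y₂) → 0 as y₁ → 0 through nonzero values. -/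
import Mathlib


noncomputable section

/-- `φ(u) = (1 - u²)⁴` for `|u| ≤ 1` and `φ(u) = 0` for `|u| > 1`. -/
def phi (u : ℝ) : ℝ := if |u| ≤ 1 then (1 - u^2)^4 else 0

/-- The sign function: `1` for positive, `-1` for negative, `0` at `0`. -/
def sgn (u : ℝ) : ℝ := if 0 < u then 1 else if u < 0 then -1 else 0

/-- `α(u) = (b₁(u) - b₂(u))/(√2 (σ₁(u)² + σ₂(u)²))`. -/
def alphaFn (b1 b2 s1 s2 : ℝ → ℝ) (u : ℝ) : ℝ :=
  (b1 u - b2 u) / (Real.sqrt 2 * ((s1 u)^2 + (s2 u)^2))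

/-- The drift-type function `h` of Statement 17: `h(y) = 0` for `y₁ = 0`, and for
`y₁ ≠ 0`,
`h(y) = (1/√2)[(b₁(y₁/√2+y₂)𝟙_{y₁<0} + b₂(y₁/√2+y₂)𝟙_{y₁>0})
              - (b₁(-y₁/√2+y₂)𝟙_{y₁>0} + b₂(-y₁/√2+y₂)𝟙_{y₁<0})]
       + sgn(y₁) φ(y₁/c) α(y₂) [σ₁(y₁/√2+y₂)² + σ₂(-y₁/√2+y₂)²]`. -/
def hFn (b1 b2 s1 s2 : ℝ → ℝ) (c : ℝ) (y : ℝ × ℝ) : ℝ :=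
  if y.1 = 0 then 0
  else
    (1 / Real.sqrt 2) *
        (((if y.1 < 0 then b1 (y.1 / Real.sqrt 2 + y.2) else 0)
            + (if 0 < y.1 then b2 (y.1 / Real.sqrt 2 + y.2) else 0))
          - ((if 0 < y.1 then b1 (-y.1 / Real.sqrt 2 + y.2) else 0)
            + (if y.1 < 0 then b2 (-y.1 / Real.sqrt 2 + y.2) else 0)))
      + sgn y.1 * phi (y.1 / c) * alphaFn b1 b2 s1 s2 y.2 *
          ((s1 (y.1 / Real.sqrt 2 + y.2))^2 + (s2 (-y.1 / Real.sqrt 2 + y.2))^2)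

lemma phi_cont : Continuous phi := by
  unfold phi
  apply Continuous.if
  · intro a ha
    have h1 : |a| = 1 := frontier_le_subset_eq continuous_abs continuous_const ha
    have h2 : a ^ 2 = 1 := by rw [← sq_abs, h1]; norm_num
    simp [h2]
  · fun_prop
  · exact continuous_const

lemma phi_zero : phi 0 = 1 := by simp [phi]

/-- If `b₁, b₂, σ₁, σ₂` are continuous with `σ₁² + σ₂² > 0` everywhere and `c > 0`,
then `h` is continuous on all of `ℝ²`; in particular, for every `y₂`,
`h(y₁, y₂) → 0` as `y₁ → 0` through nonzero values. -/
theorem stmt_17 (b1 b2 s1 s2 : ℝ → ℝ) (hb1 : Continuous b1) (hb2 : Continuous b2)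
    (hs1 : Continuous s1) (hs2 : Continuous s2)
    (hell : ∀ u : ℝ, 0 < (s1 u)^2 + (s2 u)^2) (c : ℝ) (hc : 0 < c) :
    Continuous (hFn b1 b2 s1 s2 c) ∧
    ∀ y₂ : ℝ, Filter.Tendsto (fun y₁ : ℝ => hFn b1 b2 s1 s2 c (y₁, y₂))
      (nhdsWithin 0 {(0 : ℝ)}ᶜ) (nhds 0) := by
  have hs2pos : (0:ℝ) < Real.sqrt 2 := Real.sqrt_pos.mpr two_pos
  have hs2ne : Real.sqrt 2 ≠ 0 := hs2pos.ne'
  have halpha : Continuous (alphaFn b1 b2 s1 s2) := by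
    unfold alphaFn
    exact (hb1.sub hb2).div (by fun_prop)
      (fun u => (mul_pos hs2pos (hell u)).ne')
  set F : ℝ × ℝ → ℝ := fun y =>
    (1 / Real.sqrt 2) * (b2 (y.1 / Real.sqrt 2 + y.2) - b1 (-y.1 / Real.sqrt 2 + y.2))
      + phi (y.1 / c) * alphaFn b1 b2 s1 s2 y.2 *
          ((s1 (y.1 / Real.sqrt 2 + y.2))^2 + (s2 (-y.1 / Real.sqrt 2 + y.2))^2)
    with hFdef
  set G : ℝ × ℝ → ℝ := fun y =>
    (1 / Real.sqrt 2) * (b1 (y.1 / Real.sqrt 2 + y.2) - b2 (-y.1 / Real.sqrt 2 + y.2))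
      - phi (y.1 / c) * alphaFn b1 b2 s1 s2 y.2 *
          ((s1 (y.1 / Real.sqrt 2 + y.2))^2 + (s2 (-y.1 / Real.sqrt 2 + y.2))^2)
    with hGdef
  have hFc : Continuous F := by
    apply Continuous.add
    · fun_prop
    · exact ((phi_cont.comp (by fun_prop)).mul (halpha.comp continuous_snd)).mul (by fun_prop)
  have hGc : Continuous G := by
    apply Continuous.sub
    · fun_prop
    · exact ((phi_cont.comp (by fun_prop)).mul (halpha.comp continuous_snd)).mul (by fun_prop)
  -- values at y.1 = 0
  have hF0 : ∀ y : ℝ × ℝ, y.1 = 0 → F y = 0 := by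
    intro y hy
    have hS : (s1 y.2)^2 + (s2 y.2)^2 ≠ 0 := (hell y.2).ne'
    simp only [hFdef, hy, zero_div, neg_zero, zero_add, phi_zero, alphaFn, one_mul]
    field_simp
    ring
  have hG0 : ∀ y : ℝ × ℝ, y.1 = 0 → G y = 0 := by
    intro y hy
    have hS : (s1 y.2)^2 + (s2 y.2)^2 ≠ 0 := (hell y.2).ne'
    simp only [hGdef, hy, zero_div, neg_zero, zero_add, phi_zero, alphaFn, one_mul]
    field_simp
    ring
  -- hFn agrees with F on positive side, G on negative side
  have heqF : ∀ y : ℝ × ℝ, 0 < y.1 → hFn b1 b2 s1 s2 c y = F y := by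
    intro y hy
    have hne : y.1 ≠ 0 := hy.ne'
    have hnl : ¬ y.1 < 0 := not_lt.mpr hy.le
    have hsgn : sgn y.1 = 1 := if_pos hy
    simp only [hFn, hFdef, if_neg hne, if_pos hy, if_neg hnl, hsgn, one_mul, zero_add,
      add_zero]
  have heqG : ∀ y : ℝ × ℝ, y.1 < 0 → hFn b1 b2 s1 s2 c y = G y := by
    intro y hy
    have hne : y.1 ≠ 0 := hy.ne
    have hnl : ¬ 0 < y.1 := not_lt.mpr hy.le
    have hsgn : sgn y.1 = -1 := by simp [sgn, hy, hnl]
    simp only [hFn, hGdef, if_neg hne, if_pos hy, if_neg hnl, hsgn, zero_add, add_zero]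
    ring
  have hbound : ∀ y : ℝ × ℝ, ‖hFn b1 b2 s1 s2 c y‖ ≤ |F y| + |G y| := by
    intro y
    rcases lt_trichotomy y.1 0 with hy | hy | hy
    · rw [heqG y hy]
      simpa using le_add_of_nonneg_left (abs_nonneg _)
    · simp [hFn, hy]
      positivity
    · rw [heqF y hy]
      simpa using le_add_of_nonneg_right (abs_nonneg _)
  have hcont : Continuous (hFn b1 b2 s1 s2 c) := by
    rw [continuous_iff_continuousAt]
    intro y
    rcases lt_trichotomy y.1 0 with hy | hy | hy
    · have hopen : IsOpen {z : ℝ × ℝ | z.1 < 0} := isOpen_lt continuous_fst continuous_const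
      refine hGc.continuousAt.congr ?_
      filter_upwards [hopen.mem_nhds hy] with z hz using (heqG z hz).symm
    · have h0 : hFn b1 b2 s1 s2 c y = 0 := by simp [hFn, hy]
      rw [ContinuousAt, h0]
      apply squeeze_zero_norm hbound
      have : Filter.Tendsto (fun z => |F z| + |G z|) (nhds y) (nhds (|F y| + |G y|)) :=
        ((hFc.abs.add hGc.abs).tendsto y)
      simpa [hF0 y hy, hG0 y hy] using this
    · have hopen : IsOpen {z : ℝ × ℝ | 0 < z.1} := isOpen_lt continuous_const continuous_fst
      refine hFc.continuousAt.congr ?_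
      filter_upwards [hopen.mem_nhds hy] with z hz using (heqF z hz).symm
  refine ⟨hcont, fun y₂ => ?_⟩
  have h1 : ContinuousAt (fun y₁ : ℝ => hFn b1 b2 s1 s2 c (y₁, y₂)) 0 :=
    (hcont.comp (continuous_id.prodMk continuous_const)).continuousAt
  have h0 : hFn b1 b2 s1 s2 c (0, y₂) = 0 := by simp [hFn]
  have h2 := h1.tendsto
  rw [h0] at h2
  exact h2.mono_left (nhdsWithin_le_nhds (s := {(0:ℝ)}ᶜ))
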